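/- Let n ≥ 2, let p_1,…,p_n be reals with 0 < p_i < 1 for all i, and let 1 ≤ k < n satisfy p_k > p_{k+1}. Let q_1,…,q_n be obtained from p by swapping the entries in positions k and k+1 (q_k = p_{k+1}, q_{k+1} = p_k, q_i = p_i otherwise). Then T_LO(p_1,…,p_n) > T_LO(q_1,…,q_n). -/

import Mathlib

/-- `TLO n p = ∑_{i=1}^n 1/(2 p_i ∏_{j=1}^{i-1} (1 - p_j))`, the exact expected run time
of the (1+1) EA with bit flip probabilities `p 1, …, p n` on the `n`-bit LeadingOnes
function (Böttcher–Doerr–Neumann). -/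
noncomputable def TLO (n : ℕ) (p : ℕ → ℝ) : ℝ :=
  ∑ i ∈ Finset.Icc 1 n, 1 / (2 * p i * ∏ j ∈ Finset.Ico 1 i, (1 - p j))

lemma key_ineq (a b P : ℝ) (ha1 : a < 1) (hb : 0 < b) (hba : b < a) (hP : 0 < P) :
    1/(2*b*P) + 1/(2*a*(P*(1-b))) < 1/(2*a*P) + 1/(2*b*(P*(1-a))) := by
  have ha : 0 < a := hb.trans hba
  have h1a : 0 < 1 - a := by linarith
  have h1b : 0 < 1 - b := by linarith
  have hab : 0 < a + b - a * b := by nlinarith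
  rw [div_add_div _ _ (by positivity) (by positivity),
      div_add_div _ _ (by positivity) (by positivity),
      div_lt_div_iff₀ (by positivity) (by positivity)]
  nlinarith [mul_pos (mul_pos (mul_pos (mul_pos ha hb) (pow_pos hP 3)) hab) (sub_pos.2 hba)]

/-- Exchange argument from the proof of Lemma 3.1: swapping a strictly out-of-order
adjacent pair `p_k > p_{k+1}` strictly decreases `T_LO`. -/
theorem stmt1 (n : ℕ) (hn : 2 ≤ n) (p : ℕ → ℝ)
    (hp : ∀ i ∈ Finset.Icc 1 n, 0 < p i ∧ p i < 1)
    (k : ℕ) (hk1 : 1 ≤ k) (hkn : k < n) (hswap : p (k + 1) < p k)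
    (q : ℕ → ℝ)
    (hq : q = fun i => if i = k then p (k + 1) else if i = k + 1 then p k else p i) :
    TLO n q < TLO n p := by
  have hqk : q k = p (k + 1) := by simp [hq]
  have hqk1 : q (k + 1) = p k := by simp [hq]
  have hqother : ∀ j, j ≠ k → j ≠ k + 1 → q j = p j := by
    intro j h1 h2; simp [hq, h1, h2]
  have hkmem : k ∈ Finset.Icc 1 n := by simp; omega
  have hk1mem : k + 1 ∈ Finset.Icc 1 n := by simp; omega
  obtain ⟨hpk0, hpk1⟩ := hp k hkmem
  obtain ⟨hpk10, hpk11⟩ := hp (k + 1) hk1mem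
  -- products agree below k
  have hlow : ∀ i, i ≤ k → (∏ j ∈ Finset.Ico 1 i, (1 - q j)) = ∏ j ∈ Finset.Ico 1 i, (1 - p j) := by
    intro i hi
    refine Finset.prod_congr rfl fun j hj => ?_
    rw [Finset.mem_Ico] at hj
    rw [hqother j (by omega) (by omega)]
  -- products agree above k+1
  have hhigh : ∀ i, k + 2 ≤ i → (∏ j ∈ Finset.Ico 1 i, (1 - q j)) = ∏ j ∈ Finset.Ico 1 i, (1 - p j) := by
    intro i hi
    rw [← Finset.prod_Ico_consecutive _ (by omega : 1 ≤ k + 2) hi,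
        ← Finset.prod_Ico_consecutive _ (by omega : 1 ≤ k + 2) hi]
    congr 1
    · rw [Finset.prod_Ico_succ_top (by omega : 1 ≤ k + 1),
          Finset.prod_Ico_succ_top (by omega : 1 ≤ k + 1),
          Finset.prod_Ico_succ_top hk1, Finset.prod_Ico_succ_top hk1,
          hlow k le_rfl, hqk, hqk1]
      ring
    · refine Finset.prod_congr rfl fun j hj => ?_
      rw [Finset.mem_Ico] at hj
      rw [hqother j (by omega) (by omega)]
  set P : ℝ := ∏ j ∈ Finset.Ico 1 k, (1 - p j) with hP
  have hPpos : 0 < P := by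
    refine Finset.prod_pos fun j hj => ?_
    rw [Finset.mem_Ico] at hj
    have := hp j (by simp; omega)
    linarith [this.2]
  have hPq : (∏ j ∈ Finset.Ico 1 k, (1 - q j)) = P := hlow k le_rfl
  have hPp1 : (∏ j ∈ Finset.Ico 1 (k + 1), (1 - p j)) = P * (1 - p k) := by
    rw [Finset.prod_Ico_succ_top hk1]
  have hPq1 : (∏ j ∈ Finset.Ico 1 (k + 1), (1 - q j)) = P * (1 - p (k + 1)) := by
    rw [Finset.prod_Ico_succ_top hk1, hPq, hqk]
  -- reduce the sum difference to the two swapped terms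
  have hdiff : TLO n p - TLO n q =
      (1 / (2 * p k * P) - 1 / (2 * p (k+1) * P)) +
      (1 / (2 * p (k+1) * (P * (1 - p k))) - 1 / (2 * p k * (P * (1 - p (k+1))))) := by
    unfold TLO
    rw [← Finset.sum_sub_distrib]
    have hsub : ({k, k+1} : Finset ℕ) ⊆ Finset.Icc 1 n := by
      intro x hx
      simp at hx
      rcases hx with h | h <;> simp <;> omega
    rw [← Finset.sum_subset hsub]
    · rw [Finset.sum_pair (by omega : k ≠ k + 1), hqk, hqk1, hPq, hPp1, hPq1]
    · intro i hi hni
      simp at hni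
      rw [hqother i hni.1 hni.2]
      rw [Finset.mem_Icc] at hi
      rcases le_or_gt i k with h | h
      · rw [hlow i h]; ring
      · rw [hhigh i (by omega)]; ring
  have := key_ineq (p k) (p (k+1)) P hpk1 hpk10 hswap hPpos
  linarith
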